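/- Let t be a root of t^2 - 16t + 16 = 0 and consider the Legendre elliptic curve E_t : y^2 = x(x-1)(x-t) over the algebraic numbers. Then any point on E_t with abscissa 2 has order exactly 6. -/

import Mathlib

/-- The Legendre curve `E_t : y² = x(x-1)(x-t) = x³ - (1+t)x² + tx`. -/
def Legendre (t : ℂ) : WeierstrassCurve ℂ := ⟨0, -(1 + t), 0, t, 0⟩

open WeierstrassCurve.Affine

private lemma some_eq_some' {F : Type*} [Field F] {W : WeierstrassCurve.Affine F}
    {x₁ y₁ x₂ y₂ : F} (hx : x₁ = x₂) (hy : y₁ = y₂) (h₁ : W.Nonsingular x₁ y₁)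
    (h₂ : W.Nonsingular x₂ y₂) : Point.some _ _ h₁ = Point.some _ _ h₂ := by
  subst hx; subst hy; rfl

theorem stmt12 (t : ℂ) (ht : t ^ 2 - 16 * t + 16 = 0) (η : ℂ)
    (h : (Legendre t).toAffine.Nonsingular 2 η) :
    addOrderOf (WeierstrassCurve.Affine.Point.some _ _ h) = 6 := by
  let W := (Legendre t).toAffine
  have ha₁ : W.a₁ = 0 := rfl
  have ha₂ : W.a₂ = -(1 + t) := rfl
  have ha₃ : W.a₃ = 0 := rfl
  have ha₄ : W.a₄ = t := rfl
  have ha₆ : W.a₆ = 0 := rfl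
  -- basic nonvanishing facts
  have ht2 : t ≠ 2 := by rintro rfl; norm_num at ht
  have ht0 : t ≠ 0 := by rintro rfl; norm_num at ht
  have h2t : (2 : ℂ) - t ≠ 0 := fun hc => ht2 (by linear_combination -hc)
  have hη2 : η ^ 2 = 4 - 2 * t := by
    have := h.1
    rw [equation_iff, ha₁, ha₂, ha₃, ha₄, ha₆] at this
    linear_combination this
  have hη : η ≠ 0 := by
    intro hc
    rw [hc] at hη2
    exact h2t (by linear_combination -hη2 / 2)
  have hnegY : W.negY 2 η = -η := by rw [negY, ha₁, ha₃]; ring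
  have hyne : η ≠ W.negY 2 η := by
    rw [hnegY]; intro hc; exact hη (by linear_combination hc / 2)
  -- slope of the tangent at P
  have hL : W.slope 2 2 η η = (8 - 3 * t) / (2 * η) := by
    rw [slope_of_Y_ne rfl hyne, hnegY, ha₁, ha₂, ha₄]
    rw [show η - -η = 2 * η from by ring]
    congr 1
    ring
  -- coordinates of 2P
  have hX2 : W.addX 2 2 (W.slope 2 2 η η) = t / (2 - t) := by
    rw [addX, hL, ha₁, ha₂]
    field_simp
    linear_combination ((-24) + 16 * t + (-4) * t^2) * hη2 + (2 + (-1) * t) * ht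
  -- y-coordinate of 2P
  have hY2 : W.addY 2 2 η (W.slope 2 2 η η) = (30 * t - 32) / (η * (2 - t)) := by
    rw [addY, negY, negAddY, hX2, hL, ha₁, ha₃]
    field_simp
    linear_combination (2 * t - 4) * hη2 + 5 * ht
  -- the point 2P
  have hP2 : W.Nonsingular (t / (2 - t)) ((30 * t - 32) / (η * (2 - t))) := by
    rw [← hX2, ← hY2]
    exact nonsingular_add h h fun hc => hyne hc.2
  have h2P : Point.some _ _ h + Point.some _ _ h = Point.some _ _ hP2 := by
    rw [Point.add_self_of_Y_ne hyne]
    exact some_eq_some' hX2 hY2 _ _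
  -- x-coordinates of 2P and P differ
  have hx12 : t / (2 - t) ≠ 2 := by
    intro hc
    rw [div_eq_iff h2t] at hc
    have h32 : (32 : ℂ) = 0 := by linear_combination (3 * t - 44) * hc - 9 * ht
    norm_num at h32
  -- slope of the line through 2P and P
  have hL2 : W.slope (t / (2 - t)) 2 ((30 * t - 32) / (η * (2 - t))) η = 2 / η := by
    have h34 : t - 2 * (2 - t) ≠ 0 := by
      intro hc
      have h32 : (32 : ℂ) = 0 := by linear_combination (3 * t - 44) * hc - 9 * ht
      norm_num at h32
    rw [slope_of_X_ne hx12]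
    field_simp
    linear_combination (t - 2) * hη2 - 2 * ht
  -- coordinates of 3P
  have hX3 : W.addX (t / (2 - t)) 2
      (W.slope (t / (2 - t)) 2 ((30 * t - 32) / (η * (2 - t))) η) = t := by
    rw [addX, hL2, ha₁, ha₂]
    field_simp
    linear_combination ((-2 : ℂ)) * hη2
  have hY3 : W.addY (t / (2 - t)) 2 ((30 * t - 32) / (η * (2 - t)))
      (W.slope (t / (2 - t)) 2 ((30 * t - 32) / (η * (2 - t))) η) = 0 := by
    rw [addY, negY, negAddY, hX3, hL2, ha₁, ha₃]
    field_simp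
    linear_combination 2 * ht
  -- the point 3P = (t, 0)
  have hQ : W.Nonsingular t 0 := by
    rw [← hX3, ← hY3]
    exact nonsingular_add hP2 h fun hx => absurd hx.1 hx12
  have h3P : Point.some _ _ hP2 + Point.some _ _ h = Point.some _ _ hQ := by
    rw [Point.add_of_X_ne hx12]
    exact some_eq_some' hX3 hY3 _ _
  -- (t, 0) is 2-torsion
  have hQ2 : Point.some _ _ hQ + Point.some _ _ hQ = 0 := by
    refine Point.add_of_Y_eq rfl ?_
    rw [negY, ha₁, ha₃]; ring
  -- finish by order bookkeeping
  have h3n : (3 : ℕ) • Point.some _ _ h = Point.some _ _ hQ := by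
    rw [show (3 : ℕ) = 2 + 1 from rfl, add_nsmul, two_nsmul, one_nsmul, h2P, h3P]
  have h6n : (6 : ℕ) • Point.some _ _ h = 0 := by
    rw [show (6 : ℕ) = 3 + 3 from rfl, add_nsmul, h3n, hQ2]
  have hdvd : addOrderOf (Point.some _ _ h) ∣ 6 := addOrderOf_dvd_of_nsmul_eq_zero h6n
  obtain ⟨n, hn⟩ : ∃ n, addOrderOf (Point.some _ _ h) = n := ⟨_, rfl⟩
  have hdvd' : n ∣ 6 := hn ▸ hdvd
  have hle : n ≤ 6 := Nat.le_of_dvd (by norm_num) hdvd'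
  have hord : n • Point.some _ _ h = 0 := by rw [← hn]; exact addOrderOf_nsmul_eq_zero _
  rw [hn]
  interval_cases n
  · exact absurd hdvd' (by norm_num)
  · rw [one_nsmul] at hord
    exact absurd hord (by simp [WeierstrassCurve.Affine.Point.zero_def])
  · rw [two_nsmul, h2P] at hord
    exact absurd hord (by simp [WeierstrassCurve.Affine.Point.zero_def])
  · rw [h3n] at hord
    exact absurd hord (by simp [WeierstrassCurve.Affine.Point.zero_def])
  · exact absurd hdvd' (by norm_num)
  · exact absurd hdvd' (by norm_num)
  · rfl
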